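/- arXiv:1311.4862 — 3 statements merged into one kernel-verified Lean document; each statement's English description precedes it below -/
import Mathlib

section
/- Let B(x) = (sin(πx)/π)² · ( ∑_{k=0}^∞ 1/(x−k)² − ∑_{n=1}^∞ 1/(x+n)² + 2/x ) for nonintegral x (extended by continuity to all of ℝ). Then B(x) ≥ sgn(x) for every real x, with strict inequality whenever x is not an integer. -/
open Real Filter Topology


/-- summability of `1/(c+k)^2` -/
lemma sumD (c : ℝ) : Summable (fun k : ℕ => 1 / (c + k)^2) := by
  rw [← summable_nat_add_iff (⌈|c|⌉₊ + 1)]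
  have hs : Summable (fun k : ℕ => 1 / ((k : ℝ) + 1)^2) := by
    have h := (summable_one_div_nat_pow (p := 2)).mpr one_lt_two
    have h2 := (summable_nat_add_iff (f := fun n : ℕ => 1 / (n:ℝ)^2) 1).mpr h
    exact h2.congr (by intro k; push_cast; ring_nf)
  refine Summable.of_nonneg_of_le (fun k => by positivity) (fun k => ?_) hs
  have hc : |c| ≤ (⌈|c|⌉₊ : ℝ) := Nat.le_ceil _
  have h1 : ((k:ℝ) + 1) ≤ c + ((k + (⌈|c|⌉₊ + 1) : ℕ) : ℝ) := by
    push_cast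
    have : -|c| ≤ c := neg_abs_le c
    linarith
  have h0 : (0:ℝ) < (k:ℝ) + 1 := by positivity
  apply one_div_le_one_div_of_le (by positivity)
  nlinarith

noncomputable def Dd (c : ℝ) : ℝ := ∑' k : ℕ, 1 / (c + k)^2

lemma Dd_nonneg (c : ℝ) : 0 ≤ Dd c := tsum_nonneg (fun k => by positivity)

lemma Dd_hasSum (c : ℝ) : HasSum (fun k : ℕ => 1 / (c + k)^2) (Dd c) := (sumD c).hasSum

lemma Dd_succ (c : ℝ) : Dd c = 1/c^2 + Dd (c+1) := by
  have h := Summable.tsum_eq_zero_add (sumD c)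
  simp only [Nat.cast_zero, add_zero] at h
  rw [Dd, h]
  congr 1
  apply tsum_congr
  intro k
  push_cast
  ring_nf

lemma Dd_half (c : ℝ) : Dd (c/2) + Dd ((c+1)/2) = 4 * Dd c := by
  have key : ∀ a b : ℝ, b = 2 * a → 4 * (1/b^2) = 1/a^2 := by
    intro a b hb
    rcases eq_or_ne a 0 with h | h
    · simp [h, hb]
    · subst hb; field_simp; ring
  have he : HasSum (fun k : ℕ => 4 * (1 / (c + ((2 * k : ℕ) : ℝ))^2)) (Dd (c/2)) := by
    have h' : (fun k : ℕ => 4 * (1 / (c + ((2 * k : ℕ) : ℝ))^2))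
        = fun k : ℕ => 1 / (c/2 + (k:ℝ))^2 := by
      funext k
      push_cast
      exact key _ _ (by ring)
    rw [h']; exact Dd_hasSum (c/2)
  have ho : HasSum (fun k : ℕ => 4 * (1 / (c + ((2 * k + 1 : ℕ) : ℝ))^2)) (Dd ((c+1)/2)) := by
    have h' : (fun k : ℕ => 4 * (1 / (c + ((2 * k + 1 : ℕ) : ℝ))^2))
        = fun k : ℕ => 1 / ((c+1)/2 + (k:ℝ))^2 := by
      funext k
      push_cast
      exact key _ _ (by ring)
    rw [h']; exact Dd_hasSum ((c+1)/2)
  have hsum : HasSum (fun k : ℕ => 4 * (1 / (c + (k:ℝ))^2)) (Dd (c/2) + Dd ((c+1)/2)) :=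
    HasSum.even_add_odd he ho
  exact hsum.unique ((Dd_hasSum c).mul_left 4)

/-- telescoping -/
lemma telescope (a : ℝ) (ha : 0 < a) :
    HasSum (fun k : ℕ => 1/(a+k) - 1/(a+k+1)) (1/a) := by
  have hpos : ∀ k : ℕ, 0 < a + (k:ℝ) := fun k => by positivity
  have hsummable : Summable (fun k : ℕ => 1/(a+(k:ℝ)) - 1/(a+k+1)) := by
    refine Summable.of_nonneg_of_le (fun k => ?_) (fun k => ?_) (sumD a)
    · have h1 : (0:ℝ) < a + k := hpos k
      have h2 : a + (k:ℝ) ≤ a + k + 1 := by linarith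
      have := one_div_le_one_div_of_le h1 h2
      linarith
    · have h1 : (0:ℝ) < a + k := hpos k
      have e : 1/(a+(k:ℝ)) - 1/(a+k+1) = 1/((a+k)*(a+k+1)) := by
        field_simp
        ring
      rw [e]
      apply one_div_le_one_div_of_le (by positivity)
      nlinarith
  obtain ⟨S, hS⟩ := hsummable
  have htend := hS.tendsto_sum_nat
  have hps : ∀ n : ℕ, ∑ i ∈ Finset.range n, (1/(a+(i:ℝ)) - 1/(a+i+1)) = 1/a - 1/(a+n) := by
    intro n
    have := Finset.sum_range_sub' (fun i : ℕ => 1/(a+(i:ℝ))) n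
    simp only [Nat.cast_zero, add_zero] at this
    rw [← this]
    apply Finset.sum_congr rfl
    intro i _
    push_cast
    ring_nf
  rw [show (fun n : ℕ => ∑ i ∈ Finset.range n, (1/(a+(i:ℝ)) - 1/(a+i+1))) = fun n : ℕ => 1/a - 1/(a+n) from funext hps] at htend
  have htend2 : Tendsto (fun n : ℕ => 1/a - 1/(a+(n:ℝ))) atTop (𝓝 (1/a - 0)) := by
    apply Tendsto.const_sub
    simp only [one_div]
    exact Tendsto.inv_tendsto_atTop (tendsto_atTop_add_const_left _ a tendsto_natCast_atTop_atTop)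
  have : S = 1/a - 0 := tendsto_nhds_unique htend htend2
  rw [sub_zero] at this
  rwa [this] at hS

lemma Dd_lt (x : ℝ) (hx : 0 < x) : Dd (x+1) < 1/x := by
  have ht := telescope x hx
  have hlt : ∀ k : ℕ, 1/((x+1) + (k:ℝ))^2 < 1/(x+k) - 1/(x+k+1) := by
    intro k
    have h1 : (0:ℝ) < x + k := by positivity
    have e : 1/(x+(k:ℝ)) - 1/(x+k+1) = 1/((x+k)*(x+k+1)) := by field_simp; ring
    rw [e]
    apply one_div_lt_one_div_of_lt (by positivity)
    nlinarith
  calc Dd (x+1) < ∑' k : ℕ, (1/(x+(k:ℝ)) - 1/(x+k+1)) := by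
        exact Summable.tsum_lt_tsum (fun k => (hlt k).le) (hlt 0) (sumD (x+1)) ht.summable
    _ = 1/x := ht.tsum_eq

lemma Dd_gt (x : ℝ) (hx : 0 < x) : 1/(x+1) < Dd (x+1) := by
  have ht := telescope (x+1) (by linarith)
  have hlt : ∀ k : ℕ, 1/((x+1)+(k:ℝ)) - 1/((x+1)+k+1) < 1/((x+1) + (k:ℝ))^2 := by
    intro k
    have h1 : (0:ℝ) < x + 1 + k := by positivity
    have e : 1/((x+1)+(k:ℝ)) - 1/((x+1)+k+1) = 1/((x+1+k)*(x+1+k+1)) := by field_simp; ring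
    rw [e]
    apply one_div_lt_one_div_of_lt (by positivity)
    nlinarith
  calc 1/(x+1) = ∑' k : ℕ, (1/((x+1)+(k:ℝ)) - 1/((x+1)+k+1)) := ht.tsum_eq.symm
    _ < Dd (x+1) := Summable.tsum_lt_tsum (fun k => (hlt k).le) (hlt 0) ht.summable (sumD (x+1))

lemma Dd_le_eight (c : ℝ) (hc : 1/2 ≤ c) : Dd c ≤ 8 := by
  have ht := telescope 1 one_pos
  have ht8 := ht.mul_left 8
  have hle : ∀ k : ℕ, 1/(c + (k:ℝ))^2 ≤ 8 * (1/(1+(k:ℝ)) - 1/(1+k+1)) := by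
    intro k
    have h1 : (0:ℝ) < 1 + k := by positivity
    have hne1 : (1:ℝ)+(k:ℝ) ≠ 0 := by positivity
    have hne2 : (2:ℝ)+(k:ℝ) ≠ 0 := by positivity
    have e : (1:ℝ)/(1+(k:ℝ)) - 1/(1+k+1) = 1/((1+k)*(2+k)) := by
      rw [div_sub_div _ _ hne1 (by rw [show (1:ℝ)+(k:ℝ)+1 = 2+k by ring]; exact hne2)]
      rw [show (1:ℝ)+(k:ℝ)+1 = 2+k by ring]
      congr 1
      ring
    rw [e, mul_one_div]
    have hck : ((k:ℝ)+1)/2 ≤ c + k := by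
      have : (0:ℝ) ≤ k := Nat.cast_nonneg k
      linarith
    have hck0 : (0:ℝ) < c + k := lt_of_lt_of_le (by positivity) hck
    rw [div_le_div_iff₀ (by positivity) (by positivity)]
    nlinarith [Nat.cast_nonneg (α := ℝ) k]
  calc Dd c ≤ ∑' k : ℕ, 8 * (1/(1+(k:ℝ)) - 1/(1+k+1)) :=
        Summable.tsum_le_tsum hle (sumD c) ht8.summable
    _ = 8 * (1/1) := ht8.tsum_eq
    _ = 8 := by norm_num

noncomputable def Ff (x : ℝ) : ℝ := Dd (-x) + Dd (x+1)
noncomputable def Gg (x : ℝ) : ℝ := (π / Real.sin (π * x))^2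

lemma DdC : ∀ a b : ℝ, a = b → Dd a = Dd b := fun a b h => by rw [h]

lemma Ff_nonneg (x : ℝ) : 0 ≤ Ff x := add_nonneg (Dd_nonneg _) (Dd_nonneg _)
lemma Gg_nonneg (x : ℝ) : 0 ≤ Gg x := sq_nonneg _

lemma Ff_periodic : Function.Periodic Ff 1 := by
  intro x
  unfold Ff
  have h1 := Dd_succ (-(x+1))
  rw [DdC (-(x+1)+1) (-x) (by ring), show (-(x+1))^2 = (x+1)^2 by ring] at h1
  have h2 := Dd_succ (x+1)
  linarith

lemma Gg_periodic : Function.Periodic Gg 1 := by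
  intro x
  unfold Gg
  rw [show π * (x+1) = π * x + π by ring, Real.sin_add_pi, div_neg, neg_sq]

lemma Ff_symm (x : ℝ) : Ff (1-x) = Ff x := by
  unfold Ff
  have h1 := Dd_succ (x-1)
  rw [DdC (x-1+1) x (by ring)] at h1
  have h2 := Dd_succ x
  have h3 := Dd_succ (-x)
  rw [DdC (-x+1) (1-x) (by ring), show (-x)^2 = x^2 by ring] at h3
  have h4 := Dd_succ (1-x)
  rw [DdC (1-x+1) (2-x) (by ring)] at h4
  rw [DdC (-(1-x)) (x-1) (by ring), DdC (1-x+1) (2-x) (by ring)]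
  rw [show (x-1)^2 = (1-x)^2 by ring] at h1
  linarith

lemma Gg_symm (x : ℝ) : Gg (1-x) = Gg x := by
  unfold Gg
  rw [show π * (1-x) = π - π * x by ring, Real.sin_pi_sub]

lemma Ff_half (x : ℝ) : Ff (x/2) + Ff ((x+1)/2) = 4 * Ff x := by
  unfold Ff
  have h1 := Dd_half (-x)
  have h2 := Dd_half (x+1)
  have h3 := Dd_succ (-(x+1)/2)
  have h4 := Dd_succ ((x+1)/2)
  rw [DdC (-(x+1)/2 + 1) ((-x+1)/2) (by ring), show (-(x+1)/2)^2 = ((x+1)/2)^2 by ring] at h3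
  rw [DdC ((x+1)/2 + 1) ((x+1)/2 + 1) rfl] at h4
  rw [DdC (-(x/2)) (-x/2) (by ring), DdC (x/2+1) ((x+1+1)/2) (by ring),
      DdC (-((x+1)/2)) (-(x+1)/2) (by ring)]
  rw [DdC ((x+1+1)/2) ((x+1+1)/2) rfl] at h2
  linarith

lemma sin_ne_zero_of_nonint {x : ℝ} (hx : ∀ n : ℤ, x ≠ (n:ℝ)) : Real.sin (π * x) ≠ 0 := by
  intro h
  obtain ⟨n, hn⟩ := Real.sin_eq_zero_iff.mp h
  have h2 : π * x = π * (n:ℝ) := by rw [← hn]; ring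
  exact hx n (mul_left_cancel₀ Real.pi_ne_zero h2)

lemma nonint_half {x : ℝ} (hx : ∀ n : ℤ, x ≠ (n:ℝ)) : ∀ n : ℤ, x/2 ≠ (n:ℝ) := by
  intro n h
  exact hx (2*n) (by push_cast; linarith [h])

lemma nonint_half' {x : ℝ} (hx : ∀ n : ℤ, x ≠ (n:ℝ)) : ∀ n : ℤ, (x+1)/2 ≠ (n:ℝ) := by
  intro n h
  exact hx (2*n - 1) (by push_cast; linarith [h])

lemma Gg_half (x : ℝ) (hx : ∀ n : ℤ, x ≠ (n:ℝ)) : Gg (x/2) + Gg ((x+1)/2) = 4 * Gg x := by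
  have hs : Real.sin (π * (x/2)) ≠ 0 := sin_ne_zero_of_nonint (nonint_half hx)
  have hc : Real.cos (π * (x/2)) ≠ 0 := by
    have h := sin_ne_zero_of_nonint (nonint_half' hx)
    rw [show π * ((x+1)/2) = π * (x/2) + π/2 by ring, Real.sin_add_pi_div_two] at h
    exact h
  unfold Gg
  rw [show π * ((x+1)/2) = π * (x/2) + π/2 by ring, Real.sin_add_pi_div_two]
  rw [show π * x = 2 * (π * (x/2)) by ring, Real.sin_two_mul]
  have hπ : π ≠ 0 := Real.pi_ne_zero
  set s := Real.sin (π * (x/2)) with hsdef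
  set c := Real.cos (π * (x/2)) with hcdef
  have hsc : s^2 + c^2 = 1 := Real.sin_sq_add_cos_sq (π * (x/2))
  field_simp
  linear_combination 4 * hsc

lemma Ff_decomp (x : ℝ) : Ff x = 1/x^2 + Dd (1-x) + Dd (x+1) := by
  unfold Ff
  have h := Dd_succ (-x)
  rw [DdC (-x+1) (1-x) (by ring), show (-x)^2 = x^2 by ring] at h
  linarith

set_option maxHeartbeats 1000000 in
lemma bound_Ioc (x : ℝ) (hx0 : 0 < x) (hx2 : x ≤ 1/2) : |Ff x - Gg x| ≤ 1000 := by
  have hπ3 : (3:ℝ) < π := Real.pi_gt_three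
  have hπ315 : π < 3.15 := Real.pi_lt_d2
  have hπ0 : (0:ℝ) < π := by linarith
  have hπsq : π^2 ≤ 10 := by nlinarith
  set t := π * x with htdef
  have ht0 : 0 < t := by positivity
  have htπ : t < π := by nlinarith
  have hspos : 0 < Real.sin t := Real.sin_pos_of_pos_of_lt_pi ht0 htπ
  set s := Real.sin t with hsdef
  have hFf : Ff x = 1/x^2 + Dd (1-x) + Dd (x+1) := Ff_decomp x
  have hD1 : 0 ≤ Dd (1-x) := Dd_nonneg _
  have hD1' : Dd (1-x) ≤ 8 := Dd_le_eight _ (by linarith)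
  have hD2 : 0 ≤ Dd (x+1) := Dd_nonneg _
  have hD2' : Dd (x+1) ≤ 8 := Dd_le_eight _ (by linarith)
  have hGg : Gg x = π^2 / s^2 := by unfold Gg; rw [div_pow]
  have hs_lt : s < t := Real.sin_lt ht0
  rcases le_or_gt t 1 with hcase | hcase
  · -- t ≤ 1 : cubic estimates
    have hcube : t - t^3/4 < s := by have := Real.sin_gt_sub_cube ht0; linarith [pow_pos ht0 3]
    have ht2 : t^2 = π^2 * x^2 := by rw [htdef]; ring
    have hcube2 : 0 ≤ t * (1 - t) * (1 + t) := by
      apply mul_nonneg (mul_nonneg ht0.le (by linarith)) (by linarith)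
    have hcube3 : t - t^3 = t * (1 - t) * (1 + t) := by ring
    have hs34 : 3*t/4 ≤ s := by nlinarith [hcube2, hcube3]
    have hlow : 1/x^2 ≤ Gg x := by
      rw [hGg, div_le_div_iff₀ (by positivity) (by positivity)]
      have h9 : 0 ≤ (t-s)*(t+s) := mul_nonneg (by linarith) (by linarith)
      nlinarith [h9, ht2]
    have hupp : Gg x ≤ 1/x^2 + 9 := by
      rw [hGg]
      have hkey : π^2 / s^2 - 1/x^2 = (t^2 - s^2) / (x^2 * s^2) := by
        field_simp
        ring
      have h5 : t - s ≤ t^3/4 := by linarith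
      have h6 : t + s ≤ 2*t := by linarith
      have h7 := mul_le_mul h5 h6 (by linarith) (by positivity)
      have h8 : (t^3/4)*(2*t) = t^4/2 := by ring
      have h9 : (t-s)*(t+s) = t^2 - s^2 := by ring
      have hnum : t^2 - s^2 ≤ t^4/2 := by rw [← h9, ← h8]; exact h7
      have hden : t^4/2 ≤ 9 * (x^2 * s^2) := by
        have hxx : t^2/10 ≤ x^2 := by nlinarith [sq_nonneg x, ht2]
        have hss : 9*t^2/16 ≤ s^2 := by nlinarith [hs34, hspos, ht0]
        have h10 := mul_le_mul hxx hss (by positivity) (sq_nonneg x)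
        have h11 : (t^2/10) * (9*t^2/16) = 9*t^4/160 := by ring
        nlinarith [h10, h11, sq_nonneg (t^2)]
      have hq : (t^2 - s^2) / (x^2 * s^2) ≤ 9 := by
        rw [div_le_iff₀ (by positivity)]
        linarith
      linarith
    rw [abs_le]
    constructor
    · linarith
    · linarith
  · -- 1 < t ≤ π/2
    have hsin1 : Real.sin 1 < s := by
      apply Real.strictMonoOn_sin ?_ ?_ hcase
      · constructor <;> [linarith; linarith]
      · constructor
        · linarith
        · rw [htdef]; nlinarith
    have hsin1' : (3:ℝ)/4 < Real.sin 1 := by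
      have := Real.sin_gt_sub_cube one_pos
      norm_num at this ⊢
      linarith
    have hs34 : (3:ℝ)/4 < s := by linarith
    have hGle : Gg x ≤ 18 := by
      rw [hGg, div_le_iff₀ (by positivity)]
      nlinarith [sq_nonneg (s - 3/4), hπsq, hs34]
    have hxinv : 1/x^2 ≤ 10 := by
      rw [div_le_iff₀ (by positivity)]
      have hxpi : 1 < π * x := hcase
      nlinarith [sq_nonneg (π*x - 1), mul_nonneg (by linarith : (0:ℝ) ≤ 10 - π^2) (sq_nonneg x)]
    rw [abs_le]
    constructor
    · have : 0 ≤ Ff x := Ff_nonneg x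
      linarith
    · have : 0 ≤ Gg x := Gg_nonneg x
      linarith

lemma FG_bound_aux (x : ℝ) (hx0 : 0 < x) (hx1 : x < 1) : |Ff x - Gg x| ≤ 1000 := by
  rcases le_or_gt x (1/2) with h | h
  · exact bound_Ioc x hx0 h
  · have h1 : Ff x = Ff (1 - (1-x)) := by norm_num
    rw [show Ff x = Ff (1-x) from by rw [← Ff_symm (1-x)]; norm_num,
        show Gg x = Gg (1-x) from by rw [← Gg_symm (1-x)]; norm_num]
    exact bound_Ioc (1-x) (by linarith) (by linarith)

lemma FG_bound (x : ℝ) (hx : ∀ n : ℤ, x ≠ (n:ℝ)) : |Ff x - Gg x| ≤ 1000 := by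
  have hfr0 : 0 < Int.fract x := Int.fract_pos.mpr (fun h => hx ⌊x⌋ h)
  have hfr1 : Int.fract x < 1 := Int.fract_lt_one x
  have hF : Ff (Int.fract x) = Ff x := by
    rw [Int.fract]
    have := Ff_periodic.sub_int_mul_eq (x := x) ⌊x⌋
    rwa [mul_one] at this
  have hG : Gg (Int.fract x) = Gg x := by
    rw [Int.fract]
    have := Gg_periodic.sub_int_mul_eq (x := x) ⌊x⌋
    rwa [mul_one] at this
  rw [← hF, ← hG]
  exact FG_bound_aux _ hfr0 hfr1

lemma key_identity (x : ℝ) (hx : ∀ n : ℤ, x ≠ (n:ℝ)) : Ff x = Gg x := by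
  have hstep : ∀ M : ℝ, (∀ y : ℝ, (∀ n : ℤ, y ≠ (n:ℝ)) → |Ff y - Gg y| ≤ M) →
      (∀ y : ℝ, (∀ n : ℤ, y ≠ (n:ℝ)) → |Ff y - Gg y| ≤ M/2) := by
    intro M hM y hy
    have h1 := hM (y/2) (nonint_half hy)
    have h2 := hM ((y+1)/2) (nonint_half' hy)
    have hFh := Ff_half y
    have hGh := Gg_half y hy
    have h4 : 4 * (Ff y - Gg y) = (Ff (y/2) - Gg (y/2)) + (Ff ((y+1)/2) - Gg ((y+1)/2)) := by
      linarith
    have := abs_add_le (Ff (y/2) - Gg (y/2)) (Ff ((y+1)/2) - Gg ((y+1)/2))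
    rw [← h4] at this
    rw [abs_mul, abs_of_pos (by norm_num : (0:ℝ) < 4)] at this
    linarith
  have hiter : ∀ j : ℕ, ∀ y : ℝ, (∀ n : ℤ, y ≠ (n:ℝ)) → |Ff y - Gg y| ≤ 1000 / 2^j := by
    intro j
    induction j with
    | zero => simpa using FG_bound
    | succ n ih =>
      have := hstep _ ih
      intro y hy
      have h := this y hy
      rw [show (1000:ℝ)/2^n/2 = 1000/2^(n+1) by rw [pow_succ]; ring] at h
      exact h
  have hlim : Tendsto (fun j : ℕ => (1000:ℝ)/2^j) atTop (𝓝 0) := by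
    simp only [div_eq_mul_inv, ← inv_pow]
    rw [show (0:ℝ) = 1000 * 0 by ring]
    exact (tendsto_pow_atTop_nhds_zero_of_lt_one (by norm_num) (by norm_num)).const_mul 1000
  have habs : |Ff x - Gg x| ≤ 0 :=
    ge_of_tendsto hlim (Filter.Eventually.of_forall (fun j => hiter j x hx))
  have := abs_nonneg (Ff x - Gg x)
  have h0 : |Ff x - Gg x| = 0 := le_antisymm habs this
  have := abs_eq_zero.mp h0
  linarith

lemma sq_pos_of_ne_zero' {a : ℝ} (h : a ≠ 0) : 0 < a^2 :=
  lt_of_le_of_ne (sq_nonneg a) (Ne.symm (pow_ne_zero 2 h))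

lemma strict_part (B : ℝ → ℝ)
    (hB : ∀ x : ℝ, (∀ n : ℤ, x ≠ (n:ℝ)) →
      B x = (Real.sin (π * x) / π)^2 *
        ((∑' k : ℕ, 1/(x - (k:ℝ))^2) - (∑' n : ℕ, 1/(x + (n:ℝ) + 1)^2) + 2/x))
    (x : ℝ) (hx : ∀ n : ℤ, x ≠ (n:ℝ)) : Real.sign x < B x := by
  have hx0 : x ≠ 0 := fun h => hx 0 (by simpa using h)
  have hσ : Real.sin (π * x) ≠ 0 := sin_ne_zero_of_nonint hx
  have hπ : π ≠ 0 := Real.pi_ne_zero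
  have hq : 0 < (Real.sin (π * x) / π)^2 := sq_pos_of_ne_zero' (div_ne_zero hσ hπ)
  have hBx := hB x hx
  have hA : (∑' k : ℕ, 1/(x - (k:ℝ))^2) = Dd (-x) := by
    apply tsum_congr
    intro k
    rw [show x - (k:ℝ) = -(-x + k) by ring, neg_sq]
  have hC : (∑' n : ℕ, 1/(x + (n:ℝ) + 1)^2) = Dd (x+1) := by
    apply tsum_congr
    intro n
    rw [show x + (n:ℝ) + 1 = (x+1) + n by ring]
  have hFG := key_identity x hx
  unfold Ff Gg at hFG
  rcases lt_or_gt_of_ne hx0 with hneg | hpos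
  · -- x < 0
    have hsign : Real.sign x = -1 := Real.sign_of_neg hneg
    have e2 : B x = -1 + 2*(Real.sin (π * x)/π)^2 * (Dd (-x) + 1/x) := by
      rw [hBx, hA, hC, show Dd (x+1) = (π / Real.sin (π*x))^2 - Dd (-x) by linarith]
      field_simp
      ring
    have hy : 0 < -x := by linarith
    have hgt1 : 1/(-x+1) < Dd (-x+1) := by
      have := Dd_gt (-x) hy
      rwa [DdC ((-x)+1) (-x+1) rfl] at this
    have hDsucc : Dd (-x) = 1/(-x)^2 + Dd (-x+1) := Dd_succ (-x)
    have e3 : 1/(-x)^2 + 1/(-x+1) - 1/(-x) = 1/((-x)^2*(-x+1)) := by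
      field_simp
      ring
    have e4 : 0 < 1/((-x)^2*(-x+1)) := by positivity
    have hgt : 1/(-x) < Dd (-x) := by linarith
    have hinv : 1/(-x) = -(1/x) := by rw [div_neg]
    rw [hinv] at hgt
    have : 0 < 2*(Real.sin (π * x)/π)^2 * (Dd (-x) + 1/x) := by
      apply mul_pos (by linarith)
      linarith
    rw [hsign, e2]
    linarith
  · -- 0 < x
    have hsign : Real.sign x = 1 := Real.sign_of_pos hpos
    have e1 : B x = 1 + (Real.sin (π * x)/π)^2 * (2/x - 2*Dd (x+1)) := by
      rw [hBx, hA, hC, show Dd (-x) = (π / Real.sin (π*x))^2 - Dd (x+1) by linarith]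
      field_simp
      ring
    have hDlt : Dd (x+1) < 1/x := Dd_lt x hpos
    have h2x : 2/x = 2*(1/x) := by ring
    have : 0 < (Real.sin (π * x)/π)^2 * (2/x - 2*Dd (x+1)) := by
      apply mul_pos hq
      rw [h2x]
      linarith
    rw [hsign, e1]
    linarith


theorem stmt4 (B : ℝ → ℝ) (hBc : Continuous B)
    (hB : ∀ x : ℝ, (∀ n : ℤ, x ≠ (n:ℝ)) →
      B x = (Real.sin (π * x) / π)^2 *
        ((∑' k : ℕ, 1/(x - (k:ℝ))^2) - (∑' n : ℕ, 1/(x + (n:ℝ) + 1)^2) + 2/x)) :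
    ∀ x : ℝ, Real.sign x ≤ B x ∧ ((∀ n : ℤ, x ≠ (n:ℝ)) → Real.sign x < B x) := by

  intro x
  by_cases hx : ∀ n : ℤ, x ≠ (n:ℝ)
  · exact ⟨(strict_part B hB x hx).le, fun _ => strict_part B hB x hx⟩
  · push_neg at hx
    obtain ⟨m, hm⟩ := hx
    refine ⟨?_, fun h => absurd hm (h m)⟩
    subst hm
    -- approximate from the right
    set u : ℕ → ℝ := fun j => (m:ℝ) + 1/((j:ℝ)+2) with hu
    have hupos : ∀ j : ℕ, 0 < 1/((j:ℝ)+2) := fun j => by positivity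
    have huhalf : ∀ j : ℕ, 1/((j:ℝ)+2) ≤ 1/2 := by
      intro j
      apply one_div_le_one_div_of_le (by norm_num)
      have : (0:ℝ) ≤ (j:ℝ) := Nat.cast_nonneg j
      linarith
    have hnonint : ∀ j : ℕ, ∀ n : ℤ, u j ≠ (n:ℝ) := by
      intro j n h
      rw [hu] at h
      simp only at h
      have h1 : ((n - m : ℤ):ℝ) = 1/((j:ℝ)+2) := by push_cast; linarith
      have h2 : (0:ℝ) < ((n - m : ℤ):ℝ) := by rw [h1]; exact hupos j
      have h3 : ((n - m : ℤ):ℝ) < 1 := by rw [h1]; linarith [huhalf j]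
      have h4 : 0 < n - m := by exact_mod_cast h2
      have h5 : n - m < 1 := by exact_mod_cast h3
      omega
    have htend : Filter.Tendsto u Filter.atTop (nhds ((m:ℝ))) := by
      have t1 : Filter.Tendsto (fun j : ℕ => ((j:ℝ)+2)) Filter.atTop Filter.atTop :=
        Filter.tendsto_atTop_add_const_right _ 2 tendsto_natCast_atTop_atTop
      have t2 := t1.inv_tendsto_atTop
      have t3 : Filter.Tendsto (fun j : ℕ => (m:ℝ) + ((j:ℝ)+2)⁻¹) Filter.atTop
          (nhds ((m:ℝ) + 0)) := tendsto_const_nhds.add t2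
      rw [add_zero] at t3
      refine t3.congr (fun j => ?_)
      rw [hu]
      simp [one_div]
    have hBtend : Filter.Tendsto (fun j => B (u j)) Filter.atTop (nhds (B (m:ℝ))) :=
      (hBc.continuousAt.tendsto).comp htend
    have hb : ∀ j : ℕ, Real.sign ((m:ℝ)) ≤ B (u j) := by
      intro j
      have hkey := strict_part B hB (u j) (hnonint j)
      rcases le_or_gt 0 (m:ℝ) with hm0 | hm0
      · have hupos' : 0 < u j := by
          rw [hu]; simp only; linarith [hupos j]
        rw [Real.sign_of_pos hupos'] at hkey
        have : Real.sign ((m:ℝ)) ≤ 1 := by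
          rcases eq_or_lt_of_le hm0 with h | h
          · rw [← h, Real.sign_zero]; norm_num
          · rw [Real.sign_of_pos h]
        linarith
      · have hm1 : (m:ℝ) ≤ -1 := by
          have : m < 0 := by exact_mod_cast hm0
          have : m ≤ -1 := by omega
          exact_mod_cast this
        have huneg : u j < 0 := by
          rw [hu]; simp only; linarith [huhalf j]
        rw [Real.sign_of_neg huneg] at hkey
        rw [Real.sign_of_neg hm0]
        linarith
    exact ge_of_tendsto hBtend (Filter.Eventually.of_forall hb)
end

section
/- Let b(x) = (sin(πx)/π)² · ( ∑_{k=1}^∞ 1/(x−k)² − ∑_{n=0}^∞ 1/(x+n)² + 2/x ) for nonintegral x (extended by continuity). Then b(x) = −B(−x) for all real x, and b(x) ≤ sgn(x) for every real x, with strict inequality whenever x is not an integer. -/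
open Real Filter MeasureTheory Complex


lemma summable_aux (c : ℝ) : Summable (fun n : ℕ => 1/(c+n)^2) := by
  have hs : Summable (fun n : ℕ => 4 * (1/(n:ℝ)^2)) :=
    (Real.summable_one_div_nat_pow.mpr one_lt_two).mul_left 4
  apply Summable.of_norm_bounded_eventually hs
  rw [Nat.cofinite_eq_atTop]
  filter_upwards [eventually_ge_atTop (⌈2*|c|⌉₊ + 1)] with n hn
  have h2c : 2*|c| ≤ (n:ℝ) := by
    calc 2*|c| ≤ (⌈2*|c|⌉₊ : ℝ) := Nat.le_ceil _
    _ ≤ n := by exact_mod_cast Nat.le_of_succ_le hn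
  have hnpos : (0:ℝ) < n := by
    have : (1:ℕ) ≤ n := le_trans (Nat.le_add_left 1 _) hn
    exact_mod_cast Nat.lt_of_lt_of_le Nat.zero_lt_one this
  have habs : |c| ≤ (n:ℝ)/2 := by linarith
  have h1 : (n:ℝ)/2 ≤ c + n := by
    have := neg_abs_le c; linarith
  have hpos2 : (0:ℝ) < c + n := by linarith
  rw [Real.norm_eq_abs, _root_.abs_of_nonneg (by positivity)]
  rw [show (4:ℝ) * (1/(n:ℝ)^2) = 4/(n:ℝ)^2 by ring, div_le_div_iff₀ (by positivity) (by positivity)]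
  nlinarith

lemma hasSum_tele (y : ℝ) (hy : 0 < y) :
    HasSum (fun n : ℕ => 1/(y+n) - 1/(y+n+1)) (1/y) := by
  have key : ∀ n : ℕ, 1/(y+n) - 1/(y+n+1) = 1/((y+n)*(y+n+1)) := by
    intro n
    have h1 : (0:ℝ) < y + n := by positivity
    field_simp; ring
  have hsum : Summable (fun n : ℕ => 1/(y+n) - 1/(y+n+1)) := by
    apply (summable_aux y).of_nonneg_of_le (fun n => ?_) (fun n => ?_)
    · have h1 : (0:ℝ) < y + n := by positivity
      rw [key n]; positivity
    · rw [key n]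
      have h1 : (0:ℝ) < y + n := by positivity
      apply one_div_le_one_div_of_le (by positivity)
      nlinarith
  rw [hsum.hasSum_iff_tendsto_nat]
  have heq : ∀ N : ℕ, ∑ n ∈ Finset.range N, (1/(y+n) - 1/(y+n+1)) = 1/y - 1/(y+N) := by
    intro N
    have := Finset.sum_range_sub' (f := fun i : ℕ => 1/(y+i)) N
    simp only [Nat.cast_zero, add_zero] at this
    rw [← this]
    apply Finset.sum_congr rfl
    intro i _
    push_cast; ring_nf
  simp only [heq]
  have h0 : Tendsto (fun N : ℕ => 1/(y+(N:ℝ))) atTop (nhds 0) := by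
    have h1 : Tendsto (fun N : ℕ => y + (N:ℝ)) atTop atTop :=
      tendsto_atTop_add_const_left _ y tendsto_natCast_atTop_atTop
    simpa [one_div, Pi.inv_def] using h1.inv_tendsto_atTop
  simpa using tendsto_const_nhds.sub h0

lemma term_lt (a : ℝ) (ha : 0 < a) : 1/(a*(a+1)) < 1/a^2 := by
  apply one_div_lt_one_div_of_lt (by positivity)
  nlinarith

lemma lt_sum (x : ℝ) (hx : 0 < x) : 1/x < ∑' n : ℕ, 1/(x+(n:ℝ))^2 := by
  have ht := hasSum_tele x hx
  have hgs := summable_aux x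
  have hlt : (∑' n : ℕ, (1/(x+n) - 1/(x+n+1))) < ∑' n : ℕ, 1/(x+(n:ℝ))^2 := by
    refine Summable.tsum_lt_tsum_of_nonneg (i := 0) (fun n => ?_) (fun n => ?_) ?_ hgs
    · -- 0 ≤ tele n
      have h1 : (0:ℝ) < x + n := by positivity
      have h2 : (0:ℝ) < x + n + 1 := by positivity
      have := one_div_le_one_div_of_le h1 (by linarith : x+(n:ℝ) ≤ x+n+1)
      linarith
    · -- tele n ≤ 1/(x+n)^2
      have h1 : (0:ℝ) < x + n := by positivity
      have e : 1/(x+(n:ℝ)) - 1/(x+n+1) = 1/((x+n)*((x+n)+1)) := by field_simp; ring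
      rw [e]
      exact le_of_lt (term_lt _ h1)
    · -- strict at 0
      have h1 : (0:ℝ) < x + ((0:ℕ):ℝ) := by positivity
      have e : 1/(x+((0:ℕ):ℝ)) - 1/(x+((0:ℕ):ℝ)+1) = 1/((x+((0:ℕ):ℝ))*((x+((0:ℕ):ℝ))+1)) := by
        field_simp; ring
      rw [e]
      exact term_lt _ h1
  rwa [ht.tsum_eq] at hlt

lemma sum_lt (y : ℝ) (hy : 0 < y) : (∑' k : ℕ, 1/(y+(k:ℝ)+1)^2) < 1/y := by
  have ht := hasSum_tele y hy
  have hts : Summable (fun n : ℕ => 1/(y+n) - 1/(y+n+1)) := ht.summable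
  have hlt : (∑' k : ℕ, 1/(y+(k:ℝ)+1)^2) < ∑' n : ℕ, (1/(y+n) - 1/(y+n+1)) := by
    refine Summable.tsum_lt_tsum_of_nonneg (i := 0) (fun n => ?_) (fun n => ?_) ?_ hts
    · positivity
    · have h1 : (0:ℝ) < y + n := by positivity
      have e : 1/(y+(n:ℝ)) - 1/(y+n+1) = 1/((y+n)*((y+n)+1)) := by field_simp; ring
      rw [e]
      apply one_div_le_one_div_of_le (by positivity)
      nlinarith
    · have h1 : (0:ℝ) < y + ((0:ℕ):ℝ) := by positivity
      have e : 1/(y+((0:ℕ):ℝ)) - 1/(y+((0:ℕ):ℝ)+1) = 1/((y+((0:ℕ):ℝ))*((y+((0:ℕ):ℝ))+1)) := by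
        field_simp; ring
      rw [e]
      apply one_div_lt_one_div_of_lt (by positivity)
      nlinarith
  rwa [ht.tsum_eq] at hlt


lemma coeff_eq (x : ℝ) (hx : ∀ n : ℤ, x ≠ (n:ℝ)) (n : ℤ) :
    fourierCoeff (AddCircle.liftIoc (1:ℝ) 0 (fun t : ℝ => Complex.exp (2 * π * Complex.I * x * t))) n
      = (Complex.exp (2 * π * Complex.I * x) - 1) / (2 * π * Complex.I * (x - n)) := by
  haveI : Fact (0 < (1:ℝ)) := ⟨one_pos⟩
  set c : ℂ := 2 * π * Complex.I * (x - n) with hc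
  have hcne : c ≠ 0 := by
    rw [hc]
    apply mul_ne_zero
    apply mul_ne_zero
    · simp [Real.pi_ne_zero]
    · exact Complex.I_ne_zero
    · rw [sub_ne_zero]
      exact_mod_cast fun h => hx n (by exact_mod_cast h)
  rw [fourierCoeff_liftIoc_eq]
  rw [fourierCoeffOn_eq_integral]
  have hint : ∀ t : ℝ, (fourier (-n) (t : AddCircle ((0:ℝ)+1-0))) • (Complex.exp (2 * π * Complex.I * x * t))
      = Complex.exp (c * t) := by
    intro t
    rw [fourier_coe_apply]
    rw [smul_eq_mul, ← Complex.exp_add]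
    congr 1
    push_cast
    rw [hc]
    ring
  calc (1/((0:ℝ)+1-0)) • ∫ t in (0:ℝ)..0+1, (fourier (-n) (t : AddCircle ((0:ℝ)+1-0))) • (Complex.exp (2 * π * Complex.I * x * t))
      = ∫ t in (0:ℝ)..0+1, Complex.exp (c * t) := by
        rw [show (1/((0:ℝ)+1-0) : ℝ) = 1 by norm_num, one_smul]
        exact intervalIntegral.integral_congr (fun t _ => hint t)
    _ = (Complex.exp (2 * π * Complex.I * x) - 1) / c := by
        rw [integral_exp_mul_complex hcne]
        norm_num
        rw [hc]
        have h2 : (2 * ↑π * Complex.I * (↑x - ↑n)) = 2 * ↑π * Complex.I * ↑x + ((-n : ℤ) : ℂ) * (2 * ↑π * Complex.I) := by push_cast; ring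
        rw [h2, Complex.exp_add, Complex.exp_int_mul_two_pi_mul_I, mul_one]


lemma norm_coeff (x : ℝ) (hx : ∀ n : ℤ, x ≠ (n:ℝ)) (n : ℤ) :
    ‖(Complex.exp (2 * π * Complex.I * x) - 1) / (2 * π * Complex.I * (x - n))‖^2
      = (Real.sin (π * x) / π)^2 * (1/(x - (n:ℝ))^2) := by
  have hxn : x - (n:ℝ) ≠ 0 := sub_ne_zero.mpr (hx n)
  have hnum : ‖Complex.exp (2 * π * Complex.I * x) - 1‖^2 = 4 * Real.sin (π * x)^2 := by
    have h1 : (2 * ↑π * Complex.I * ↑x : ℂ) = ((2 * π * x : ℝ) : ℂ) * Complex.I := by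
      push_cast; ring
    rw [h1, Complex.exp_mul_I, ← Complex.ofReal_cos, ← Complex.ofReal_sin]
    rw [Complex.sq_norm, Complex.normSq_apply]
    simp only [Complex.add_re, Complex.sub_re, Complex.ofReal_re, Complex.mul_re,
      Complex.ofReal_im, Complex.I_re, Complex.I_im, Complex.one_re, Complex.add_im,
      Complex.sub_im, Complex.mul_im, Complex.one_im]
    have hc : Real.cos (2 * π * x) = 2 * Real.cos (π * x)^2 - 1 := by
      rw [show 2 * π * x = 2 * (π * x) by ring, Real.cos_two_mul]
    have hp := Real.sin_sq_add_cos_sq (π * x)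
    nlinarith [Real.sin_sq_add_cos_sq (2 * π * x)]
  have hden : ‖(2 * ↑π * Complex.I * (↑x - ↑n) : ℂ)‖^2 = 4 * π^2 * (x - (n:ℝ))^2 := by
    have h1 : (2 * ↑π * Complex.I * (↑x - ↑n) : ℂ) = ((2 * π * (x - n) : ℝ) : ℂ) * Complex.I := by
      push_cast; ring
    rw [h1, norm_mul, Complex.norm_I, mul_one,
      Complex.norm_real, Real.norm_eq_abs]
    rw [_root_.sq_abs]
    ring
  rw [norm_div, div_pow, hnum, hden]
  have hpi := Real.pi_ne_zero
  field_simp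


lemma key_parseval (x : ℝ) (hx : ∀ n : ℤ, x ≠ (n:ℝ)) :
    HasSum (fun n : ℤ => (Real.sin (π * x) / π)^2 * (1/(x - (n:ℝ))^2)) 1 := by
  haveI : Fact (0 < (1:ℝ)) := ⟨one_pos⟩
  set F : ℝ → ℂ := fun t => Complex.exp (2 * π * Complex.I * x * t) with hF
  set g : AddCircle (1:ℝ) → ℂ := AddCircle.liftIoc 1 0 F with hg
  have hgnorm : ∀ z, ‖g z‖ = 1 := by
    intro z
    show ‖F _‖ = 1
    rw [hF]
    simp only
    rw [Complex.norm_exp]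
    norm_num [Complex.mul_re]
  have hmeas : Measurable g := by
    have h1 : Measurable (AddCircle.equivIoc (1:ℝ) 0) :=
      (AddCircle.measurableEquivIoc 1 0).measurable
    have h2 : Continuous F := by
      apply Complex.continuous_exp.comp
      fun_prop
    exact h2.measurable.comp (measurable_subtype_coe.comp h1)
  have hmem : MemLp g 2 (AddCircle.haarAddCircle) :=
    MemLp.of_bound hmeas.aestronglyMeasurable 1 (Filter.Eventually.of_forall fun z => (hgnorm z).le)
  set f := hmem.toLp g with hf
  have hae : ∀ᵐ z ∂(AddCircle.haarAddCircle : Measure (AddCircle (1:ℝ))), f z = g z :=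
    hmem.coeFn_toLp
  have hcoeff : ∀ n : ℤ, fourierCoeff (f : AddCircle (1:ℝ) → ℂ) n = fourierCoeff g n := by
    intro n
    unfold fourierCoeff
    apply integral_congr_ae
    filter_upwards [hae] with z hz
    rw [hz]
  have hpar := tsum_sq_fourierCoeff f
  have hrhs : (∫ z : AddCircle (1:ℝ), ‖f z‖^2 ∂AddCircle.haarAddCircle) = 1 := by
    rw [integral_congr_ae (g := fun _ => (1:ℝ)) ?_]
    · simp
    · filter_upwards [hae] with z hz
      rw [hz, hgnorm z]; norm_num
  have hcoeff2 : ∀ n : ℤ, ‖fourierCoeff (f : AddCircle (1:ℝ) → ℂ) n‖^2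
      = (Real.sin (π * x)/π)^2 * (1/(x-(n:ℝ))^2) := by
    intro n
    rw [hcoeff n, hg, hF, coeff_eq x hx n]
    exact norm_coeff x hx n
  have htsum : ∑' n : ℤ, (Real.sin (π * x)/π)^2 * (1/(x-(n:ℝ))^2) = 1 := by
    have h1 := hpar.trans hrhs
    conv_rhs => rw [← h1]
    exact tsum_congr fun n => (hcoeff2 n).symm
  have hsummable : Summable (fun n : ℤ => (Real.sin (π * x)/π)^2 * (1/(x-(n:ℝ))^2)) := by
    by_contra h
    rw [tsum_eq_zero_of_not_summable h] at htsum
    norm_num at htsum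
  have h2 := hsummable.hasSum
  rwa [htsum] at h2

lemma key_identity_s5 (x : ℝ) (hx : ∀ n : ℤ, x ≠ (n:ℝ)) :
    (Real.sin (π * x)/π)^2 *
      ((∑' k : ℕ, 1/(x - (k:ℝ) - 1)^2) + (∑' n : ℕ, 1/(x + (n:ℝ))^2)) = 1 := by
  set s2 := (Real.sin (π * x)/π)^2 with hs2
  have hsumP : Summable (fun n : ℕ => 1/(x - (n:ℝ))^2) := by
    apply (summable_aux (-x)).congr
    intro n
    rw [show -x + (n:ℝ) = -(x - n) by ring, neg_sq]
  have hsumN : Summable (fun n : ℕ => 1/(x + (n:ℝ) + 1)^2) := by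
    apply (summable_aux (x+1)).congr
    intro n
    rw [show x + 1 + (n:ℝ) = x + n + 1 by ring]
  have hsum2 : Summable (fun n : ℕ => 1/(x + (n:ℝ))^2) := by
    apply (summable_aux x).congr
    intro n; rfl
  have hsum1 : Summable (fun k : ℕ => 1/(x - (k:ℝ) - 1)^2) := by
    apply (summable_aux (1-x)).congr
    intro n
    rw [show 1 - x + (n:ℝ) = -(x - n - 1) by ring, neg_sq]
  have hA : HasSum (fun n : ℕ => s2 * (1/(x - (n:ℝ))^2))
      (s2 * ∑' n : ℕ, 1/(x - (n:ℝ))^2) := hsumP.hasSum.mul_left s2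
  have hB : HasSum (fun n : ℕ => s2 * (1/(x + (n:ℝ) + 1)^2))
      (s2 * ∑' n : ℕ, 1/(x + (n:ℝ) + 1)^2) := hsumN.hasSum.mul_left s2
  have hZ : HasSum (fun m : ℤ => s2 * (1/(x - (m:ℝ))^2))
      ((s2 * ∑' n : ℕ, 1/(x - (n:ℝ))^2) + (s2 * ∑' n : ℕ, 1/(x + (n:ℝ) + 1)^2)) := by
    apply HasSum.of_nat_of_neg_add_one
    · have e : (fun n : ℕ => s2 * (1/(x - (((n:ℕ):ℤ):ℝ))^2))
          = (fun n : ℕ => s2 * (1/(x - (n:ℝ))^2)) := by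
        funext n; push_cast; ring
      rw [e]; exact hA
    · have e : (fun n : ℕ => s2 * (1/(x - ((-((n:ℕ)+1):ℤ):ℝ))^2))
          = (fun n : ℕ => s2 * (1/(x + (n:ℝ) + 1)^2)) := by
        funext n; push_cast; ring_nf
      rw [e]; exact hB
  have huniq := hZ.unique (key_parseval x hx)
  -- split off first terms
  have hP0 : (∑' n : ℕ, 1/(x - (n:ℝ))^2)
      = 1/x^2 + ∑' k : ℕ, 1/(x - (k:ℝ) - 1)^2 := by
    rw [Summable.tsum_eq_zero_add hsumP]
    norm_num
    apply tsum_congr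
    intro k
    push_cast
    ring_nf
  have hN0 : (∑' n : ℕ, 1/(x + (n:ℝ))^2)
      = 1/x^2 + ∑' n : ℕ, 1/(x + (n:ℝ) + 1)^2 := by
    rw [Summable.tsum_eq_zero_add hsum2]
    norm_num
    apply tsum_congr
    intro k
    push_cast
    ring_nf
  rw [hP0] at huniq
  rw [hN0]
  nlinarith [huniq]


theorem stmt5 (B b : ℝ → ℝ) (hBc : Continuous B) (hbc : Continuous b)
    (hB : ∀ x : ℝ, (∀ n : ℤ, x ≠ (n:ℝ)) →
      B x = (Real.sin (π * x) / π)^2 *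
        ((∑' k : ℕ, 1/(x - (k:ℝ))^2) - (∑' n : ℕ, 1/(x + (n:ℝ) + 1)^2) + 2/x))
    (hb : ∀ x : ℝ, (∀ n : ℤ, x ≠ (n:ℝ)) →
      b x = (Real.sin (π * x) / π)^2 *
        ((∑' k : ℕ, 1/(x - (k:ℝ) - 1)^2) - (∑' n : ℕ, 1/(x + (n:ℝ))^2) + 2/x)) :
    (∀ x : ℝ, b x = -B (-x)) ∧
    (∀ x : ℝ, b x ≤ Real.sign x ∧ ((∀ n : ℤ, x ≠ (n:ℝ)) → b x < Real.sign x)) := by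
  have hstrict : ∀ x : ℝ, (∀ n : ℤ, x ≠ (n:ℝ)) → b x < Real.sign x := by
    intro x hx
    have hxne : x ≠ 0 := fun h => hx 0 (by rw [h]; norm_num)
    have hsin : Real.sin (π * x) ≠ 0 := by
      intro h
      rcases Real.sin_eq_zero_iff.mp h with ⟨m, hm⟩
      rw [mul_comm π x] at hm
      exact hx m (mul_right_cancel₀ Real.pi_ne_zero hm).symm
    have hs2pos : 0 < (Real.sin (π * x)/π)^2 := by positivity
    have hkey := key_identity_s5 x hx
    rw [hb x hx]
    set S1 := ∑' k : ℕ, 1/(x - (k:ℝ) - 1)^2 with hS1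
    set S2 := ∑' n : ℕ, 1/(x + (n:ℝ))^2 with hS2
    rcases hxne.lt_or_gt with hneg | hpos
    · rw [Real.sign_of_neg hneg]
      have hS1lt : S1 < -(1/x) := by
        have e : S1 = ∑' k : ℕ, 1/((-x) + (k:ℝ) + 1)^2 := by
          rw [hS1]
          apply tsum_congr
          intro k
          rw [show -x + (k:ℝ) + 1 = -(x - k - 1) by ring, neg_sq]
        have h2 := sum_lt (-x) (by linarith)
        rw [show 1/(-x) = -(1/x) by ring] at h2
        rw [e]; exact h2
      have hexp : (Real.sin (π * x)/π)^2 * (S1 - S2 + 2/x)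
          = 2*((Real.sin (π * x)/π)^2*(S1 + 1/x)) - (Real.sin (π * x)/π)^2*(S1 + S2) := by ring
      have hneg2 : (Real.sin (π * x)/π)^2*(S1 + 1/x) < 0 :=
        mul_neg_of_pos_of_neg hs2pos (by linarith)
      rw [hexp]
      linarith
    · rw [Real.sign_of_pos hpos]
      have hS2gt : 1/x < S2 := lt_sum x hpos
      have hexp : (Real.sin (π * x)/π)^2 * (S1 - S2 + 2/x)
          = (Real.sin (π * x)/π)^2*(S1 + S2) - 2*((Real.sin (π * x)/π)^2*(S2 - 1/x)) := by ring
      have hpos2 : 0 < (Real.sin (π * x)/π)^2*(S2 - 1/x) :=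
        mul_pos hs2pos (by linarith)
      rw [hexp]
      linarith
  have hpart1 : ∀ x : ℝ, b x = -B (-x) := by
    have hfun : b = (fun x => -B (-x)) := by
      apply Continuous.ext_on dense_irrational hbc ((hBc.comp continuous_neg).neg)
      intro x hxirr
      have hx : ∀ n : ℤ, x ≠ (n:ℝ) := fun n => hxirr.ne_int n
      have hnx : ∀ n : ℤ, -x ≠ (n:ℝ) := fun n h => hx (-n) (by push_cast; linarith)
      show b x = -B (-x)
      rw [hb x hx, hB (-x) hnx]
      have e0 : (Real.sin (π * -x) / π)^2 = (Real.sin (π * x)/π)^2 := by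
        rw [show π * -x = -(π * x) by ring, Real.sin_neg]; ring
      have e1 : (∑' k : ℕ, 1/(-x - (k:ℝ))^2) = ∑' n : ℕ, 1/(x + (n:ℝ))^2 := by
        apply tsum_congr; intro k
        rw [show -x - (k:ℝ) = -(x + k) by ring, neg_sq]
      have e2 : (∑' n : ℕ, 1/(-x + (n:ℝ) + 1)^2) = ∑' k : ℕ, 1/(x - (k:ℝ) - 1)^2 := by
        apply tsum_congr; intro k
        rw [show -x + (k:ℝ) + 1 = -(x - k - 1) by ring, neg_sq]
      rw [e0, e1, e2]
      ring
    exact fun x => congrFun hfun x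
  refine ⟨hpart1, fun x => ⟨?_, hstrict x⟩⟩
  by_cases hnonint : ∀ n : ℤ, x ≠ (n:ℝ)
  · exact (hstrict x hnonint).le
  · push_neg at hnonint
    obtain ⟨m, hm⟩ := hnonint
    set u : ℕ → ℝ := fun j => x - 1/((j:ℝ)+2) with hu
    have hulim : Filter.Tendsto u Filter.atTop (nhds x) := by
      have h1 : Filter.Tendsto (fun j : ℕ => ((j:ℝ)+2)) Filter.atTop Filter.atTop :=
        Filter.tendsto_atTop_add_const_right _ 2 tendsto_natCast_atTop_atTop
      have h2 : Filter.Tendsto (fun j : ℕ => 1/((j:ℝ)+2)) Filter.atTop (nhds 0) := by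
        simpa [one_div, Pi.inv_def] using h1.inv_tendsto_atTop
      have h3 : Filter.Tendsto (fun j : ℕ => x - 1/((j:ℝ)+2)) Filter.atTop (nhds (x - 0)) :=
        tendsto_const_nhds.sub h2
      rw [sub_zero] at h3
      exact h3
    have hblim : Filter.Tendsto (fun j => b (u j)) Filter.atTop (nhds (b x)) :=
      (hbc.tendsto x).comp hulim
    have hbound : ∀ j : ℕ, 0 < 1/((j:ℝ)+2) ∧ 1/((j:ℝ)+2) < 1 := by
      intro j
      constructor
      · positivity
      · rw [div_lt_one (by positivity)]
        linarith [Nat.cast_nonneg (α := ℝ) j]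
    have hunonint : ∀ j : ℕ, ∀ n : ℤ, u j ≠ (n:ℝ) := by
      intro j n h
      have hval : x - 1/((j:ℝ)+2) = (n:ℝ) := h
      have h1 : ((m - n : ℤ):ℝ) = 1/((j:ℝ)+2) := by push_cast; rw [← hm] at *; linarith
      obtain ⟨hp, hl⟩ := hbound j
      have h4 : (0:ℤ) < m - n := by exact_mod_cast h1 ▸ hp
      have h5 : (m - n : ℤ) < 1 := by exact_mod_cast h1 ▸ hl
      omega
    rcases le_or_gt x 0 with hx0 | hx0
    · have hneg : ∀ j : ℕ, b (u j) ≤ -1 := by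
        intro j
        have hu0 : u j < 0 := by
          have := (hbound j).1
          show x - 1/((j:ℝ)+2) < 0
          linarith
        have hlt := hstrict (u j) (hunonint j)
        rw [Real.sign_of_neg hu0] at hlt
        linarith
      have hble : b x ≤ -1 := le_of_tendsto hblim (Filter.Eventually.of_forall hneg)
      rcases hx0.lt_or_eq with hlt | heq
      · rw [Real.sign_of_neg hlt]; linarith
      · rw [heq] at hble
        rw [heq, Real.sign_zero]
        linarith
    · have hm1 : (1:ℝ) ≤ x := by
        have h0 : (0:ℤ) < m := by
          have : (0:ℝ) < (m:ℝ) := hm ▸ hx0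
          exact_mod_cast this
        rw [hm]
        exact_mod_cast h0
      have hple : ∀ j : ℕ, b (u j) ≤ 1 := by
        intro j
        have hu0 : 0 < u j := by
          have := (hbound j).2
          show 0 < x - 1/((j:ℝ)+2)
          linarith
        have hlt := hstrict (u j) (hunonint j)
        rw [Real.sign_of_pos hu0] at hlt
        linarith
      have : b x ≤ 1 := le_of_tendsto hblim (Filter.Eventually.of_forall hple)
      rw [Real.sign_of_pos hx0]
      linarith
end

section
/- Let W(x) = (sin(πx)/π)² · ( ∑_{k=1}^∞ 1/(x−k)² − ∑_{n=1}^∞ 1/(x+n)² + 2/x ) (extended by continuity) and K(x) = (sin(πx)/(πx))². Then W is odd: W(x) + W(−x) = 0 for all real x; moreover 1 − K(x) ≤ W(x) ≤ 1 for x > 0, and −1 ≤ W(x) ≤ −1 + K(x) for x < 0. -/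
set_option maxHeartbeats 1000000
open Real Filter Topology

noncomputable def Bsum (y : ℝ) : ℝ := ∑' n : ℕ, 1/(y+(n:ℝ)+1)^2

lemma sumB (y : ℝ) : Summable (fun n : ℕ => 1/(y+(n:ℝ)+1)^2) := by
  obtain ⟨N, hN⟩ := exists_nat_ge (-y)
  rw [← summable_nat_add_iff N]
  have hsum : Summable (fun n : ℕ => 1/((n:ℝ)+1)^2) := by
    have := (summable_nat_add_iff 1).mpr (Real.summable_one_div_nat_pow.mpr (by norm_num : 1 < 2))
    apply this.congr; intro n; push_cast; ring
  apply Summable.of_nonneg_of_le (fun n => by positivity) _ hsum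
  intro n
  have h1 : ((n:ℝ)+1) ≤ y + (↑(n+N):ℝ) + 1 := by push_cast; linarith
  have h2 : (0:ℝ) < (n:ℝ)+1 := by positivity
  apply one_div_le_one_div_of_le (by positivity)
  nlinarith

lemma Bshift (y : ℝ) : Bsum y = 1/(y+1)^2 + Bsum (y+1) := by
  rw [Bsum, Summable.tsum_eq_zero_add (sumB y)]
  norm_num [Bsum]
  apply tsum_congr; intro n; push_cast; ring_nf

lemma B_half_pos (x : ℝ) : Bsum (x/2) + Bsum ((x+1)/2) = 4 * (Bsum x - 1/(x+1)^2) := by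
  have he : (fun k : ℕ => 1/(x+(2*k:ℕ)+2)^2) = (fun k : ℕ => (1/4) * (1/(x/2+(k:ℝ)+1)^2)) := by
    funext k; push_cast
    rw [div_mul_div_comm, one_mul]
    congr 1; ring
  have ho : (fun k : ℕ => 1/(x+(2*k+1:ℕ)+2)^2) = (fun k : ℕ => (1/4) * (1/((x+1)/2+(k:ℝ)+1)^2)) := by
    funext k; push_cast
    rw [div_mul_div_comm, one_mul]
    congr 1; ring
  have hse : Summable (fun k : ℕ => 1/(x+((2*k:ℕ):ℝ)+2)^2) := by
    rw [he]; exact (sumB (x/2)).mul_left _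
  have hso : Summable (fun k : ℕ => 1/(x+((2*k+1:ℕ):ℝ)+2)^2) := by
    rw [ho]; exact (sumB ((x+1)/2)).mul_left _
  have key := tsum_even_add_odd (f := fun n : ℕ => 1/(x+(n:ℝ)+2)^2) hse hso
  have h1 : ∑' n : ℕ, 1/(x+(n:ℝ)+2)^2 = Bsum (x+1) := by
    rw [Bsum]; apply tsum_congr; intro n; ring_nf
  have h2 : ∑' k : ℕ, 1/(x+((2*k:ℕ):ℝ)+2)^2 = (1/4) * Bsum (x/2) := by
    rw [he, tsum_mul_left, Bsum]
  have h3 : ∑' k : ℕ, 1/(x+((2*k+1:ℕ):ℝ)+2)^2 = (1/4) * Bsum ((x+1)/2) := by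
    rw [ho, tsum_mul_left, Bsum]
  rw [h1, h2, h3] at key
  have h4 : Bsum (x+1) = Bsum x - 1/(x+1)^2 := by rw [Bshift x]; ring
  rw [h4] at key; linarith

lemma B_half_neg (x : ℝ) : Bsum (-(x/2)) + Bsum (-((x+1)/2)) = 4 * Bsum (-x) := by
  have he : (fun k : ℕ => 1/(-x+(2*k:ℕ)+1)^2) = (fun k : ℕ => (1/4) * (1/(-((x+1)/2)+(k:ℝ)+1)^2)) := by
    funext k; push_cast
    rw [div_mul_div_comm, one_mul]
    congr 1; ring
  have ho : (fun k : ℕ => 1/(-x+(2*k+1:ℕ)+1)^2) = (fun k : ℕ => (1/4) * (1/(-(x/2)+(k:ℝ)+1)^2)) := by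
    funext k; push_cast
    rw [div_mul_div_comm, one_mul]
    congr 1; ring
  have hse : Summable (fun k : ℕ => 1/(-x+((2*k:ℕ):ℝ)+1)^2) := by
    rw [he]; exact (sumB (-((x+1)/2))).mul_left _
  have hso : Summable (fun k : ℕ => 1/(-x+((2*k+1:ℕ):ℝ)+1)^2) := by
    rw [ho]; exact (sumB (-(x/2))).mul_left _
  have key := tsum_even_add_odd (f := fun n : ℕ => 1/(-x+(n:ℝ)+1)^2) hse hso
  have h1 : ∑' n : ℕ, 1/(-x+(n:ℝ)+1)^2 = Bsum (-x) := rfl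
  have h2 : ∑' k : ℕ, 1/(-x+((2*k:ℕ):ℝ)+1)^2 = (1/4) * Bsum (-((x+1)/2)) := by
    rw [he, tsum_mul_left, Bsum]
  have h3 : ∑' k : ℕ, 1/(-x+((2*k+1:ℕ):ℝ)+1)^2 = (1/4) * Bsum (-(x/2)) := by
    rw [ho, tsum_mul_left, Bsum]
  rw [h1, h2, h3] at key; linarith

noncomputable def gfun (x : ℝ) : ℝ := 1/x^2 + Bsum x + Bsum (-x)

lemma g_per (x : ℝ) : gfun (x+1) = gfun x := by
  have h1 : Bsum (x+1) = Bsum x - 1/(x+1)^2 := by rw [Bshift x]; ring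
  have h2 : Bsum (-(x+1)) = 1/x^2 + Bsum (-x) := by
    have := Bshift (-(x+1))
    simpa [neg_add, show -(x+1)+1 = -x by ring, neg_sq] using this
  rw [gfun, gfun, h1, h2]; ring

lemma g_half (x : ℝ) : gfun (x/2) + gfun ((x+1)/2) = 4 * gfun x := by
  have h1 : (1:ℝ)/(x/2)^2 = 4/x^2 := by rw [div_pow]; rw [div_div_eq_mul_div]; ring_nf
  have h2 : (1:ℝ)/((x+1)/2)^2 = 4/(x+1)^2 := by rw [div_pow]; rw [div_div_eq_mul_div]; ring_nf
  have := B_half_pos x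
  have := B_half_neg x
  rw [gfun, gfun, gfun, h1, h2]
  have e1 : (4:ℝ)/x^2 = 4*(1/x^2) := by ring
  have e2 : (4:ℝ)/(x+1)^2 = 4*(1/(x+1)^2) := by ring
  linarith

def NotInt (x : ℝ) : Prop := ∀ n : ℤ, x ≠ (n:ℝ)

lemma sin_ne {x : ℝ} (hx : NotInt x) : Real.sin (π * x) ≠ 0 := by
  intro h
  rw [Real.sin_eq_zero_iff] at h
  obtain ⟨n, hn⟩ := h
  apply hx n
  have : π * x = π * n := by linarith [hn]
  exact mul_left_cancel₀ pi_ne_zero this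

open Classical in
noncomputable def hfun (x : ℝ) : ℝ :=
  if (∃ n : ℤ, x = (n:ℝ)) then 0 else π^2/(Real.sin (π*x))^2 - gfun x

lemma hfun_eq {x : ℝ} (hx : NotInt x) : hfun x = π^2/(Real.sin (π*x))^2 - gfun x := by
  rw [hfun, if_neg]; rintro ⟨n, hn⟩; exact hx n hn

lemma hfun_int {x : ℝ} (hx : ∃ n : ℤ, x = (n:ℝ)) : hfun x = 0 := by
  rw [hfun, if_pos hx]

lemma hfun_per (x : ℝ) : hfun (x+1) = hfun x := by
  by_cases hx : ∃ n : ℤ, x = (n:ℝ)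
  · obtain ⟨n, rfl⟩ := hx
    rw [hfun_int ⟨n, rfl⟩, hfun_int ⟨n+1, by push_cast; ring⟩]
  · have hx' : NotInt x := fun n h => hx ⟨n, h⟩
    have hx1 : NotInt (x+1) := by
      intro n h; exact hx ⟨n-1, by push_cast; linarith⟩
    rw [hfun_eq hx1, hfun_eq hx', g_per]
    have : Real.sin (π*(x+1)) = - Real.sin (π*x) := by
      rw [mul_add, mul_one, Real.sin_add_pi]
    rw [this, neg_sq]

lemma hfun_half {x : ℝ} (hx : NotInt x) :
    hfun (x/2) + hfun ((x+1)/2) = 4 * hfun x := by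
  have hx2 : NotInt (x/2) := by
    intro n h; exact hx (2*n) (by push_cast; linarith)
  have hx12 : NotInt ((x+1)/2) := by
    intro n h; exact hx (2*n-1) (by push_cast; linarith)
  have hs := sin_ne hx2
  have hc' := sin_ne hx12
  have hcos : Real.sin (π*((x+1)/2)) = Real.cos (π*(x/2)) := by
    rw [show π*((x+1)/2) = π*(x/2) + π/2 by ring, Real.sin_add_pi_div_two]
  have hc : Real.cos (π*(x/2)) ≠ 0 := hcos ▸ hc'
  have hsin2 : Real.sin (π*x) = 2 * Real.sin (π*(x/2)) * Real.cos (π*(x/2)) := by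
    rw [show π*x = 2*(π*(x/2)) by ring, Real.sin_two_mul]
  have hg := g_half x
  rw [hfun_eq hx2, hfun_eq hx12, hfun_eq hx, hcos, hsin2]
  set s := Real.sin (π*(x/2))
  set c := Real.cos (π*(x/2))
  have hsc : s^2 + c^2 = 1 := Real.sin_sq_add_cos_sq _
  have key : π^2/s^2 + π^2/c^2 = 4*(π^2/(2*s*c)^2) := by
    field_simp
    linear_combination 4 * hsc
  linarith [key, hg]

lemma B_nonneg (y : ℝ) : 0 ≤ Bsum y := tsum_nonneg (fun n => by positivity)

lemma B_le_zeta {y : ℝ} (hy : 0 ≤ y) : Bsum y ≤ π^2/6 := by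
  have hz : HasSum (fun n : ℕ => 1/((n:ℝ)+1)^2) (π^2/6) := by
    have h0 := (hasSum_nat_add_iff' (f := fun n : ℕ => (1:ℝ)/(n:ℝ)^2) 1).mpr hasSum_zeta_two
    simp only [Finset.range_one, Finset.sum_singleton, Nat.cast_zero] at h0
    norm_num at h0
    exact h0.congr_fun (fun n => by norm_num)
  have hle : ∀ n : ℕ, 1/(y+(n:ℝ)+1)^2 ≤ 1/((n:ℝ)+1)^2 := by
    intro n
    apply one_div_le_one_div_of_le (by positivity)
    nlinarith [Nat.cast_nonneg (α := ℝ) n]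
  calc Bsum y ≤ ∑' n : ℕ, 1/((n:ℝ)+1)^2 := Summable.tsum_le_tsum hle (sumB y) hz.summable
    _ = π^2/6 := hz.tsum_eq

lemma keylem {u s : ℝ} (hu0 : 0 < u) (hu1 : u ≤ 1) (hsq : (u*(1-u^2/4))^2 < s^2) :
    u^2 ≤ s^2 + u^2*s^2 := by
  nlinarith [hsq, sq_nonneg (u^3), mul_nonneg (mul_nonneg (sq_nonneg u) (sq_nonneg u)) (sub_nonneg.2 (show u^2 ≤ 1 by nlinarith)), sq_nonneg u]

lemma phi_aux {x : ℝ} (h0 : 0 < x) (h2 : x ≤ 1/2) :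
    -4 ≤ π^2/(Real.sin (π*x))^2 - 1/x^2 - 1/(1-x)^2 ∧
    π^2/(Real.sin (π*x))^2 - 1/x^2 - 1/(1-x)^2 ≤ 2*π^2 := by
  have hpi := pi_pos
  set s := Real.sin (π*x) with hs_def
  have hs : 0 < s := Real.sin_pos_of_pos_of_lt_pi (by positivity) (by nlinarith)
  have hslt : s < π*x := Real.sin_lt (by positivity)
  have l1 : 1/x^2 ≤ π^2/s^2 := by
    rw [div_le_div_iff₀ (by positivity) (by positivity)]
    nlinarith
  have h1x : 1/(1-x)^2 ≤ 4 := by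
    rw [div_le_iff₀ (by nlinarith)]
    nlinarith
  have h1xpos : 0 ≤ 1/(1-x)^2 := by positivity
  have hxpos : 0 ≤ 1/x^2 := by positivity
  constructor
  · linarith
  · by_cases hx4 : x ≤ 1/4
    · have hu1 : π*x ≤ 1 := by nlinarith [pi_le_four]
      have hcube := Real.sin_gt_sub_cube (show 0 < π*x by positivity)
      have hlbpos : 0 < π*x*(1-(π*x)^2/4) := by nlinarith
      have hlb : π*x*(1-(π*x)^2/4) < s := by nlinarith
      have hsq : (π*x*(1-(π*x)^2/4))^2 < s^2 := by nlinarith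
      have key : (π*x)^2 ≤ s^2 + (π*x)^2*s^2 := keylem (by positivity) hu1 hsq
      have e0 : π^2/s^2 ≤ (1 + π^2*x^2)/x^2 := by
        rw [div_le_div_iff₀ (by positivity) (by positivity)]
        nlinarith [key]
      have e1 : (1 + π^2*x^2)/x^2 - 1/x^2 = π^2 := by field_simp; ring
      linarith
    · push_neg at hx4
      have hmem1 : π/4 ∈ Set.Icc (-(π/2)) (π/2) := by constructor <;> linarith
      have hmem2 : π*x ∈ Set.Icc (-(π/2)) (π/2) := by constructor <;> nlinarith
      have hmono := Real.strictMonoOn_sin.monotoneOn hmem1 hmem2 (by nlinarith)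
      rw [Real.sin_pi_div_four] at hmono
      have hsqrt2 : Real.sqrt 2 ^ 2 = 2 := Real.sq_sqrt (by norm_num)
      have hsqrt2' : 0 ≤ Real.sqrt 2 := Real.sqrt_nonneg 2
      have hs2 : 1/2 ≤ s^2 := by nlinarith
      have e0 : π^2/s^2 ≤ 2*π^2 := by
        rw [div_le_iff₀ (by positivity)]
        nlinarith
      linarith

lemma hfun_bound : ∀ x ∈ Set.Icc (0:ℝ) 1, |hfun x| ≤ 2*π^2 + 20 + π^2/3 := by
  intro x hx
  have hpi := pi_pos
  by_cases hint : ∃ n : ℤ, x = (n:ℝ)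
  · rw [hfun_int hint, abs_zero]; positivity
  · have hx' : NotInt x := fun n h => hint ⟨n, h⟩
    have hx0 : 0 < x := lt_of_le_of_ne hx.1 (fun h => hx' 0 (by simp [← h]))
    have hx1 : x < 1 := lt_of_le_of_ne hx.2 (fun h => hx' 1 (by simp [h]))
    have hBneg : Bsum (-x) = 1/(1-x)^2 + Bsum (1-x) := by
      have := Bshift (-x)
      rw [show -x+1 = 1-x by ring] at this
      rw [this]
    have heq : hfun x = (π^2/(Real.sin (π*x))^2 - 1/x^2 - 1/(1-x)^2)
        - Bsum x - Bsum (1-x) := by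
      rw [hfun_eq hx', gfun, hBneg]; ring
    have hB1 : 0 ≤ Bsum x := B_nonneg x
    have hB2 : Bsum x ≤ π^2/6 := B_le_zeta hx0.le
    have hB3 : 0 ≤ Bsum (1-x) := B_nonneg _
    have hB4 : Bsum (1-x) ≤ π^2/6 := B_le_zeta (by linarith)
    have hphi : -4 ≤ π^2/(Real.sin (π*x))^2 - 1/x^2 - 1/(1-x)^2 ∧
        π^2/(Real.sin (π*x))^2 - 1/x^2 - 1/(1-x)^2 ≤ 2*π^2 := by
      by_cases hhalf : x ≤ 1/2
      · exact phi_aux hx0 hhalf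
      · have := phi_aux (show 0 < 1-x by linarith) (by linarith)
        rw [show π*(1-x) = π - π*x by ring, Real.sin_pi_sub,
          show (1:ℝ)-(1-x) = x by ring] at this
        constructor <;> linarith [this.1, this.2]
    rw [heq, abs_le]
    constructor <;> linarith [hphi.1, hphi.2]

lemma hfun_zero_Icc : ∀ x ∈ Set.Icc (0:ℝ) 1, hfun x = 0 := by
  set S := (fun x => |hfun x|) '' Set.Icc (0:ℝ) 1 with hS
  have bdd : BddAbove S := by
    refine ⟨2*π^2 + 20 + π^2/3, ?_⟩
    rintro y ⟨x, hx, rfl⟩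
    exact hfun_bound x hx
  have hne : S.Nonempty := ⟨|hfun 0|, ⟨0, by norm_num⟩⟩
  set M := sSup S with hM
  have hle : ∀ y ∈ Set.Icc (0:ℝ) 1, |hfun y| ≤ M :=
    fun y hy => le_csSup bdd ⟨y, hy, rfl⟩
  have hM0 : 0 ≤ M := le_trans (abs_nonneg _) (hle 0 (by norm_num))
  have key : ∀ y ∈ S, y ≤ M/2 := by
    rintro y ⟨x, hx, rfl⟩
    show |hfun x| ≤ M/2
    by_cases hint : ∃ n : ℤ, x = (n:ℝ)
    · rw [hfun_int hint, abs_zero]; linarith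
    · have hx' : NotInt x := fun n h => hint ⟨n, h⟩
      have h1 := hle (x/2) ⟨by linarith [hx.1], by linarith [hx.2]⟩
      have h2 := hle ((x+1)/2) ⟨by linarith [hx.1], by linarith [hx.2]⟩
      have heq := hfun_half hx'
      have : |hfun x| = |hfun (x/2) + hfun ((x+1)/2)|/4 := by
        rw [show hfun (x/2) + hfun ((x+1)/2) = 4 * hfun x from heq, abs_mul]
        norm_num
      rw [this]
      have := abs_add_le (hfun (x/2)) (hfun ((x+1)/2))
      linarith
  have hM2 : M ≤ M/2 := csSup_le hne key
  intro x hx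
  have := hle x hx
  have habs : |hfun x| ≤ 0 := by linarith
  exact abs_eq_zero.1 (le_antisymm habs (abs_nonneg _))

lemma hfun_zero (x : ℝ) : hfun x = 0 := by
  have hper : Function.Periodic hfun 1 := fun y => by rw [hfun_per y]
  have h1 : hfun x = hfun (Int.fract x) := by
    rw [Int.fract]
    have := hper.sub_int_mul_eq (x := x) (n := ⌊x⌋)
    rw [mul_one] at this
    exact this.symm
  rw [h1]
  exact hfun_zero_Icc _ ⟨Int.fract_nonneg x, (Int.fract_lt_one x).le⟩

lemma gfun_eq {x : ℝ} (hx : NotInt x) : π^2/(Real.sin (π*x))^2 = gfun x := by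
  have h := hfun_zero x
  rw [hfun_eq hx] at h
  linarith

lemma B_le_inv {x : ℝ} (hx : 0 < x) : Bsum x ≤ 1/x := by
  apply tsum_le_of_sum_range_le (fun n => by positivity)
  intro N
  have hstep : ∀ n : ℕ, 1/(x+(n:ℝ)+1)^2 ≤ 1/(x+(n:ℝ)) - 1/(x+(n:ℝ)+1) := by
    intro n
    have hn : (0:ℝ) ≤ (n:ℝ) := Nat.cast_nonneg n
    have h1 : 1/(x+(n:ℝ)) - 1/(x+(n:ℝ)+1) = 1/((x+(n:ℝ))*(x+(n:ℝ)+1)) := by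
      field_simp
      ring
    rw [h1]
    apply one_div_le_one_div_of_le (by positivity)
    nlinarith
  calc ∑ n ∈ Finset.range N, 1/(x+(n:ℝ)+1)^2
      ≤ ∑ n ∈ Finset.range N, (1/(x+(n:ℝ)) - 1/(x+(n:ℝ)+1)) := Finset.sum_le_sum (fun n _ => hstep n)
    _ = 1/(x+(0:ℕ)) - 1/(x+(N:ℕ)) := by
        rw [← Finset.sum_range_sub' (f := fun n : ℕ => 1/(x+(n:ℝ)))]
        apply Finset.sum_congr rfl
        intro n _; push_cast; ring
    _ ≤ 1/x := by
        have : (0:ℝ) ≤ 1/(x+(N:ℕ)) := by positivity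
        simp only [Nat.cast_zero, add_zero]
        linarith

lemma B_ge {x : ℝ} (hx : 0 < x) : 1/x - 1/(2*x^2) ≤ Bsum x := by
  set G : ℝ → ℝ := fun a => 1/a - 1/(2*a^2) with hG
  have hterm : ∀ n : ℕ, G (x+n) - G (x+n+1) ≤ 1/(x+(n:ℝ)+1)^2 := by
    intro n
    have hn : (0:ℝ) ≤ (n:ℝ) := Nat.cast_nonneg n
    set a := x + (n:ℝ) with ha
    have ha0 : 0 < a := by positivity
    have ha1 : 0 < a + 1 := by positivity
    have h1 : G a - G (a+1) = (2*a^2-1)/(2*a^2*(a+1)^2) := by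
      rw [hG]; field_simp; ring
    have h2 : (2*a^2-1)/(2*a^2*(a+1)^2) ≤ (2*a^2)/(2*a^2*(a+1)^2) :=
      (div_le_div_iff_of_pos_right (by positivity)).mpr (by linarith)
    have h3 : (2*a^2)/(2*a^2*(a+1)^2) = 1/(a+1)^2 := by field_simp
    rw [h1]
    rw [h3] at h2
    exact h2
  have hpartial : ∀ N : ℕ, G x - G (x+N) ≤ Bsum x := by
    intro N
    have h1 : ∑ n ∈ Finset.range N, (G (x+n) - G (x+n+1)) = G (x+(0:ℕ)) - G (x+(N:ℕ)) := by
      rw [← Finset.sum_range_sub' (f := fun n : ℕ => G (x+(n:ℝ)))]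
      apply Finset.sum_congr rfl
      intro n _; push_cast; ring_nf
    have h2 : ∑ n ∈ Finset.range N, (G (x+n) - G (x+n+1)) ≤ ∑ n ∈ Finset.range N, 1/(x+(n:ℝ)+1)^2 :=
      Finset.sum_le_sum (fun n _ => hterm n)
    have h3 : ∑ n ∈ Finset.range N, 1/(x+(n:ℝ)+1)^2 ≤ Bsum x :=
      Summable.sum_le_tsum _ (fun n _ => by positivity) (sumB x)
    simp only [Nat.cast_zero, add_zero] at h1
    linarith
  have ht1 : Filter.Tendsto (fun N : ℕ => x+(N:ℝ)) Filter.atTop Filter.atTop :=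
    Filter.tendsto_atTop_add_const_left _ x tendsto_natCast_atTop_atTop
  have ht2 : Filter.Tendsto (fun N : ℕ => G (x+(N:ℝ))) Filter.atTop (𝓝 0) := by
    have ha : Filter.Tendsto (fun N : ℕ => (x+(N:ℝ))⁻¹) Filter.atTop (𝓝 0) :=
      ht1.inv_tendsto_atTop
    have hb : Filter.Tendsto (fun N : ℕ => (2*(x+(N:ℝ))^2)⁻¹) Filter.atTop (𝓝 0) := by
      apply Filter.Tendsto.inv_tendsto_atTop
      have hsq : Filter.Tendsto (fun N : ℕ => (x+(N:ℝ))*(x+(N:ℝ))) Filter.atTop Filter.atTop :=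
        ht1.atTop_mul_atTop₀ ht1
      exact (hsq.const_mul_atTop (by norm_num : (0:ℝ) < 2)).congr (fun n => by ring)
    have := ha.sub hb
    rw [sub_zero] at this
    apply this.congr (fun n => by rw [hG]; simp [one_div])
  have hfin : Filter.Tendsto (fun N : ℕ => G x - G (x+(N:ℝ))) Filter.atTop (𝓝 (G x)) := by
    have := (tendsto_const_nhds (x := G x) (f := Filter.atTop (α := ℕ))).sub ht2
    rwa [sub_zero] at this
  exact le_of_tendsto hfin (Filter.Eventually.of_forall hpartial)

theorem stmt6 (W K : ℝ → ℝ) (hWc : Continuous W)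
    (hW : ∀ x : ℝ, (∀ n : ℤ, x ≠ (n:ℝ)) →
      W x = (Real.sin (π * x) / π)^2 *
        ((∑' k : ℕ, 1/(x - (k:ℝ) - 1)^2) - (∑' n : ℕ, 1/(x + (n:ℝ) + 1)^2) + 2/x))
    (hK0 : K 0 = 1)
    (hK : ∀ x : ℝ, x ≠ 0 → K x = (Real.sin (π * x) / (π * x))^2) :
    (∀ x : ℝ, W x + W (-x) = 0) ∧
    (∀ x : ℝ, 0 < x → 1 - K x ≤ W x ∧ W x ≤ 1) ∧
    (∀ x : ℝ, x < 0 → -1 ≤ W x ∧ W x ≤ -1 + K x) := by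
  have hA : ∀ x : ℝ, (∑' k : ℕ, 1/(x - (k:ℝ) - 1)^2) = Bsum (-x) := by
    intro x
    exact tsum_congr fun k => by rw [show (x-(k:ℝ)-1)^2 = (-x+(k:ℝ)+1)^2 by ring]
  have hB : ∀ x : ℝ, (∑' n : ℕ, 1/(x + (n:ℝ) + 1)^2) = Bsum x := fun x => rfl
  -- formula for W at non-integers
  have hW' : ∀ x : ℝ, NotInt x →
      W x = 1 - (Real.sin (π*x)/π)^2 * (1/x^2 + 2*Bsum x - 2/x) := by
    intro x hx
    rw [hW x hx, hA x, hB x]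
    have hid := gfun_eq hx
    rw [gfun] at hid
    have hs := sin_ne hx
    have hπ := pi_ne_zero
    have h1 : Bsum (-x) = π^2/(Real.sin (π*x))^2 - 1/x^2 - Bsum x := by linarith
    have h2 : (Real.sin (π*x)/π)^2 * (π^2/(Real.sin (π*x))^2) = 1 := by
      field_simp
    calc (Real.sin (π*x)/π)^2 * (Bsum (-x) - Bsum x + 2/x)
        = (Real.sin (π*x)/π)^2 * (π^2/(Real.sin (π*x))^2)
          - (Real.sin (π*x)/π)^2 * (1/x^2 + 2*Bsum x - 2/x) := by rw [h1]; ring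
      _ = 1 - (Real.sin (π*x)/π)^2 * (1/x^2 + 2*Bsum x - 2/x) := by rw [h2]
  have hKpos : ∀ x : ℝ, x ≠ 0 → K x = (Real.sin (π*x)/π)^2 * (1/x^2) := by
    intro x hx
    rw [hK x hx, ← div_div, div_pow, div_eq_mul_one_div]
  -- oddness at non-integers
  have hodd0 : ∀ x : ℝ, NotInt x → W (-x) = - W x := by
    intro x hx
    have hnx : NotInt (-x) := fun n h => hx (-n) (by push_cast at h ⊢; linarith)
    rw [hW (-x) hnx, hW x hx, hA x, hB x, hA (-x), hB (-x)]
    have e1 : Bsum (-(-x)) = Bsum x := by rw [neg_neg]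
    rw [e1, show π * -x = -(π*x) by ring, Real.sin_neg]
    ring
  -- oddness everywhere
  have hoddAll : ∀ x : ℝ, W x + W (-x) = 0 := by
    have FC : Continuous (fun x => W x + W (-x)) := hWc.add (hWc.comp continuous_neg)
    have hdense : Dense {x : ℝ | Irrational x} := dense_irrational
    have heq : (fun x => W x + W (-x)) = (fun _ => (0:ℝ)) := by
      apply Continuous.ext_on hdense FC continuous_const
      intro x hx
      have hni : NotInt x := fun n h => (Int.not_irrational n) (h ▸ hx)
      simp only [hodd0 x hni]
      ring
    exact fun x => congrFun heq x
  -- main inequality at positive non-integers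
  have main_pos : ∀ x : ℝ, 0 < x → NotInt x → 1 - K x ≤ W x ∧ W x ≤ 1 := by
    intro x hx hni
    have hW'' := hW' x hni
    have hK'' := hKpos x (ne_of_gt hx)
    have hBle := B_le_inv hx
    have hBge := B_ge hx
    have hs2 : 0 ≤ (Real.sin (π*x)/π)^2 := sq_nonneg _
    constructor
    · rw [hW'', hK'']
      have hprod : 0 ≤ (Real.sin (π*x)/π)^2 * (1/x - Bsum x) :=
        mul_nonneg hs2 (by linarith)
      have hiden : (1 - (Real.sin (π*x)/π)^2 * (1/x^2 + 2*Bsum x - 2/x))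
          - (1 - (Real.sin (π*x)/π)^2 * (1/x^2))
          = 2*((Real.sin (π*x)/π)^2 * (1/x - Bsum x)) := by ring
      linarith [hprod, hiden]
    · rw [hW'']
      have e1 : 2*(1/(2*x^2)) = 1/x^2 := by field_simp
      have e2 : 2/x = 2*(1/x) := by ring
      have h0 : 0 ≤ 1/x^2 + 2*Bsum x - 2/x := by linarith
      nlinarith [mul_nonneg hs2 h0]
  -- continuity of K away from 0
  have hKcont : ∀ x : ℝ, x ≠ 0 → ContinuousAt K x := by
    intro x hx
    have hne : ∀ᶠ y in nhds x, y ≠ 0 := eventually_ne_nhds hx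
    have heq : K =ᶠ[nhds x] fun y => (Real.sin (π*y)/(π*y))^2 :=
      hne.mono (fun y hy => hK y hy)
    have hcF : ContinuousAt (fun y => (Real.sin (π*y)/(π*y))^2) x := by
      apply ContinuousAt.pow
      exact ContinuousAt.div
        ((Real.continuous_sin.comp (continuous_const.mul continuous_id)).continuousAt)
        ((continuous_const.mul continuous_id).continuousAt)
        (by simpa using mul_ne_zero pi_ne_zero hx)
    exact hcF.congr heq.symm
  -- main inequality for all positive x
  have main_pos_all : ∀ x : ℝ, 0 < x → 1 - K x ≤ W x ∧ W x ≤ 1 := by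
    intro x hx
    by_cases hni : NotInt x
    · exact main_pos x hx hni
    · set u : ℕ → ℝ := fun j => x + 1/((j:ℝ)+2) with hu_def
      have hu_ni : ∀ j : ℕ, NotInt (u j) := by
        intro j m hm
        unfold NotInt at hni; push_neg at hni
        obtain ⟨n, hn⟩ := hni
        have hj0 : (0:ℝ) ≤ (j:ℝ) := Nat.cast_nonneg j
        have h0 : (0:ℝ) < 1/((j:ℝ)+2) := by positivity
        have h1 : 1/((j:ℝ)+2) < 1 := by rw [div_lt_one (by linarith)]; linarith
        have hcast : ((m - n : ℤ):ℝ) = 1/((j:ℝ)+2) := by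
          push_cast
          rw [hu_def] at hm
          simp only at hm
          rw [hn] at hm
          linarith
        have h2 : (0:ℤ) < m - n := by
          have : (0:ℝ) < ((m-n:ℤ):ℝ) := by rw [hcast]; exact h0
          exact_mod_cast this
        have h3 : (m - n : ℤ) < 1 := by
          have : ((m-n:ℤ):ℝ) < 1 := by rw [hcast]; exact h1
          exact_mod_cast this
        omega
      have hu_pos : ∀ j : ℕ, 0 < u j := by
        intro j
        have hj0 : (0:ℝ) ≤ (j:ℝ) := Nat.cast_nonneg j
        have : (0:ℝ) < 1/((j:ℝ)+2) := by positivity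
        simp only [hu_def]
        linarith
      have htend : Filter.Tendsto u Filter.atTop (nhds x) := by
        have t0 : Filter.Tendsto (fun j : ℕ => ((j:ℝ)+2)) Filter.atTop Filter.atTop :=
          Filter.tendsto_atTop_add_const_right _ 2 tendsto_natCast_atTop_atTop
        have t1 := t0.inv_tendsto_atTop
        have t2 : Filter.Tendsto u Filter.atTop (nhds (x + 0)) := by
          apply Filter.Tendsto.add tendsto_const_nhds
          exact t1.congr (fun j => (one_div _).symm)
        rwa [add_zero] at t2
      have hWt : Filter.Tendsto (fun j => W (u j)) Filter.atTop (nhds (W x)) :=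
        (hWc.continuousAt).tendsto.comp htend
      have hKt : Filter.Tendsto (fun j => K (u j)) Filter.atTop (nhds (K x)) :=
        ((hKcont x (ne_of_gt hx)).tendsto).comp htend
      constructor
      · exact le_of_tendsto_of_tendsto' (tendsto_const_nhds.sub hKt) hWt
          (fun j => (main_pos (u j) (hu_pos j) (hu_ni j)).1)
      · exact le_of_tendsto hWt
          (Filter.Eventually.of_forall (fun j => (main_pos (u j) (hu_pos j) (hu_ni j)).2))
  refine ⟨hoddAll, main_pos_all, ?_⟩
  intro x hx
  have hpos := main_pos_all (-x) (by linarith)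
  have hodd := hoddAll x
  have hKeq : K (-x) = K x := by
    rw [hK x (by linarith), hK (-x) (by intro h; linarith [neg_eq_zero.1 h])]
    rw [show π * -x = -(π*x) by ring, Real.sin_neg, neg_div_neg_eq]
  constructor
  · linarith [hpos.2]
  · linarith [hpos.1, hKeq]
end
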